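/- Let X₁, S, Z₁, X₂ be mutually independent {0,1}-valued random variables, set Y₁ = X₁ ⊕ S ⊕ Z₁ (mod-2 addition), Y₂ = X₂, Y = (Y₁,Y₂), and V = S. Then: (i) I(X₁ ; Y | V, X₂) = I(X₁ ; Y₁ | S); (ii) I(V,X₁,X₂ ; Y) - I(V,X₁,X₂ ; S) = I(X₁ ; Y₁ | S) + I(S ; Y₁) + H(X₂) - H(S); and (iii) I(V,X₂ ; Y) - I(V,X₂ ; S) = I(S ; Y₁ | X₂) + H(X₂) - H(S). In particular, if X₂ is uniform and S is uniform, the right-hand side of (ii) is at least I(X₁;Y₁|S) and the right-hand side of (iii) is nonnegative. -/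
import Mathlib


open scoped BigOperators
open Classical

noncomputable section

/-- Probability that the random variable `X` equals `x` under the pmf `p`. -/
def pr {Ω α : Type*} [Fintype Ω] (p : Ω → ℝ) (X : Ω → α) (x : α) : ℝ :=
  ∑ ω : Ω, if X ω = x then p ω else 0

/-- Shannon entropy (in bits), with the convention `0 · log₂ 0 = 0`. -/
def ent {Ω α : Type*} [Fintype Ω] (p : Ω → ℝ) (X : Ω → α) : ℝ :=
  -∑ x ∈ Finset.univ.image X, pr p X x * Real.logb 2 (pr p X x)

/-- Conditional entropy `H(X|Y) = H(X,Y) - H(Y)`. -/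
def condEnt {Ω α β : Type*} [Fintype Ω] (p : Ω → ℝ) (X : Ω → α) (Y : Ω → β) : ℝ :=
  ent p (fun ω => (X ω, Y ω)) - ent p Y

/-- Mutual information `I(X;Y) = H(X) + H(Y) - H(X,Y)`. -/
def mi {Ω α β : Type*} [Fintype Ω] (p : Ω → ℝ) (X : Ω → α) (Y : Ω → β) : ℝ :=
  ent p X + ent p Y - ent p (fun ω => (X ω, Y ω))

/-- Conditional mutual information `I(X;Y|Z) = H(X,Z) + H(Y,Z) - H(X,Y,Z) - H(Z)`. -/
def cmi {Ω α β γ : Type*} [Fintype Ω] (p : Ω → ℝ) (X : Ω → α) (Y : Ω → β) (Z : Ω → γ) : ℝ :=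
  ent p (fun ω => (X ω, Z ω)) + ent p (fun ω => (Y ω, Z ω))
    - ent p (fun ω => (X ω, Y ω, Z ω)) - ent p Z

/-- `p` is a probability mass function on the finite sample space `Ω`. -/
def IsPMF {Ω : Type*} [Fintype Ω] (p : Ω → ℝ) : Prop :=
  (∀ ω, 0 ≤ p ω) ∧ ∑ ω : Ω, p ω = 1

/-- The random variables `X` and `Y` are independent under `p`. -/
def IndepRV {Ω α β : Type*} [Fintype Ω] (p : Ω → ℝ) (X : Ω → α) (Y : Ω → β) : Prop :=
  ∀ x y, pr p (fun ω => (X ω, Y ω)) (x, y) = pr p X x * pr p Y y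

end

section Helpers

variable {Ω α β : Type*} [Fintype Ω]

lemma pr_nonneg (p : Ω → ℝ) (hp : ∀ ω, 0 ≤ p ω) (X : Ω → α) (x : α) : 0 ≤ pr p X x := by
  refine Finset.sum_nonneg fun ω _ => ?_
  split <;> simp [hp ω]

lemma pr_eq_zero (p : Ω → ℝ) (X : Ω → α) (x : α) (hx : x ∉ Finset.univ.image X) :
    pr p X x = 0 := by
  refine Finset.sum_eq_zero fun ω _ => ?_
  have : X ω ≠ x := fun h => hx (Finset.mem_image.2 ⟨ω, Finset.mem_univ ω, h⟩)
  simp [this]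

lemma sum_pr [Fintype α] (p : Ω → ℝ) (hsum : ∑ ω : Ω, p ω = 1) (X : Ω → α) :
    ∑ x : α, pr p X x = 1 := by
  unfold pr
  rw [Finset.sum_comm]
  simpa [Finset.sum_ite_eq] using hsum

lemma ent_eq_sum_univ [Fintype α] (p : Ω → ℝ) (X : Ω → α) :
    ent p X = -∑ x : α, pr p X x * Real.logb 2 (pr p X x) := by
  unfold ent
  congr 1
  refine Finset.sum_subset (Finset.subset_univ _) fun x _ hx => ?_
  rw [pr_eq_zero p X x hx]; ring

lemma pr_map [Fintype α] (p : Ω → ℝ) (X : Ω → α) (F : α → β) (b : β) :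
    pr p (fun ω => F (X ω)) b = ∑ a : α, if F a = b then pr p X a else 0 := by
  have h1 : ∀ a : α, (if F a = b then pr p X a else 0)
      = ∑ ω : Ω, if X ω = a then (if F a = b then p ω else 0) else 0 := by
    intro a
    by_cases h : F a = b <;> simp [h, pr]
  simp only [h1]
  rw [Finset.sum_comm]
  unfold pr
  refine Finset.sum_congr rfl fun ω _ => ?_
  rw [Finset.sum_ite_eq]
  simp

lemma pr_comp_inj (p : Ω → ℝ) (X : Ω → α) (f : α → β) (hf : Function.Injective f) (x : α) :
    pr p (fun ω => f (X ω)) (f x) = pr p X x := by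
  unfold pr
  refine Finset.sum_congr rfl fun ω _ => ?_
  simp [hf.eq_iff]

lemma ent_comp (p : Ω → ℝ) (X : Ω → α) (f : α → β) (hf : Function.Injective f) :
    ent p (fun ω => f (X ω)) = ent p X := by
  unfold ent
  congr 1
  have himg : Finset.univ.image (fun ω => f (X ω)) = (Finset.univ.image X).image f := by
    rw [Finset.image_image]; rfl
  rw [himg, Finset.sum_image (fun a _ b _ h => hf h)]
  exact Finset.sum_congr rfl fun x _ => by rw [pr_comp_inj p X f hf x]

lemma ent_pair_of_indep [Fintype α] [Fintype β] (p : Ω → ℝ) (hp : IsPMF p)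
    (A : Ω → α) (B : Ω → β) (h : IndepRV p A B) :
    ent p (fun ω => (A ω, B ω)) = ent p A + ent p B := by
  rw [ent_eq_sum_univ, ent_eq_sum_univ, ent_eq_sum_univ]
  rw [Fintype.sum_prod_type]
  have key : ∀ a b, pr p (fun ω => (A ω, B ω)) (a, b)
        * Real.logb 2 (pr p (fun ω => (A ω, B ω)) (a, b))
      = pr p B b * (pr p A a * Real.logb 2 (pr p A a))
        + pr p A a * (pr p B b * Real.logb 2 (pr p B b)) := by
    intro a b
    rw [h a b]
    rcases eq_or_ne (pr p A a) 0 with h0 | h0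
    · simp [h0]
    rcases eq_or_ne (pr p B b) 0 with h1 | h1
    · simp [h1]
    rw [Real.logb_mul h0 h1]; ring
  simp only [key]
  have hA : ∑ a : α, pr p A a = 1 := sum_pr p hp.2 A
  have hB : ∑ b : β, pr p B b = 1 := sum_pr p hp.2 B
  have step : ∀ a : α, ∑ b : β,
        (pr p B b * (pr p A a * Real.logb 2 (pr p A a))
          + pr p A a * (pr p B b * Real.logb 2 (pr p B b)))
      = pr p A a * Real.logb 2 (pr p A a)
        + pr p A a * (∑ b : β, pr p B b * Real.logb 2 (pr p B b)) := by
    intro a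
    rw [Finset.sum_add_distrib, ← Finset.sum_mul, hB, ← Finset.mul_sum]
    ring
  simp only [step]
  rw [Finset.sum_add_distrib, ← Finset.sum_mul, hA]
  ring

lemma sum_ite_pair {γ : Type*} [Fintype γ] (c : Prop) [Decidable c] (C : ℝ) (m : γ → ℝ) (d : γ) :
    (∑ y : γ, if c ∧ y = d then C * m y else 0) = (if c then C else 0) * m d := by
  split_ifs with h
  · simp [h]
  · simp [h]

lemma sum_ite_const {γ : Type*} [Fintype γ] (c : Prop) [Decidable c] (C : ℝ) (m : γ → ℝ)
    (h1 : ∑ y : γ, m y = 1) :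
    (∑ y : γ, if c then C * m y else 0) = if c then C else 0 := by
  split_ifs with h
  · rw [← Finset.mul_sum, h1, mul_one]
  · simp

lemma sum_ite_pick {γ : Type*} [Fintype γ] (P : Prop) [Decidable P] (v : γ → ℝ) (b : γ) :
    (∑ s : γ, if s = b ∧ P then v s else 0) = if P then v b else 0 := by
  split_ifs with h
  · simp [h]
  · simp [h]

section indep
variable (p : Ω → ℝ) (hsum : ∑ ω : Ω, p ω = 1) (X₁ S Z₁ X₂ : Ω → Bool)
variable (hIndep : ∀ a b c d : Bool,
      pr p (fun ω => (X₁ ω, S ω, Z₁ ω, X₂ ω)) (a, b, c, d)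
        = pr p X₁ a * pr p S b * pr p Z₁ c * pr p X₂ d)

include hsum hIndep in
lemma indepA (f : Bool × Bool × Bool → α) :
    IndepRV p (fun ω => f (X₁ ω, S ω, Z₁ ω)) X₂ := by
  intro a d
  have hm4 : ∑ y : Bool, pr p X₂ y = 1 := sum_pr p hsum X₂
  refine (pr_map p (fun ω => (X₁ ω, S ω, Z₁ ω, X₂ ω))
      (fun q => (f (q.1, q.2.1, q.2.2.1), q.2.2.2)) (a, d)).trans
    (Eq.trans ?_ (congrArg (· * pr p X₂ d)
      (pr_map p (fun ω => (X₁ ω, S ω, Z₁ ω, X₂ ω))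
        (fun q => f (q.1, q.2.1, q.2.2.1)) a).symm))
  simp only [Fintype.sum_prod_type, hIndep, Prod.mk.injEq]
  simp only [sum_ite_const (h1 := hm4)]
  simp only [Finset.sum_mul]
  refine Finset.sum_congr rfl fun x _ => Finset.sum_congr rfl fun s _ =>
    Finset.sum_congr rfl fun z _ => ?_
  by_cases h : f (x, s, z) = a
  · cases d <;> simp [h, Fintype.sum_bool]
  · simp [h]

include hsum hIndep in
lemma indepB (g : Bool × Bool → α) : IndepRV p S (fun ω => g (X₁ ω, Z₁ ω)) := by
  intro b c
  have hm4 : ∑ y : Bool, pr p X₂ y = 1 := sum_pr p hsum X₂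
  have hm2 : pr p S true + pr p S false = 1 := by
    simpa [Fintype.sum_bool] using sum_pr p hsum S
  refine (pr_map p (fun ω => (X₁ ω, S ω, Z₁ ω, X₂ ω))
      (fun q => (q.2.1, g (q.1, q.2.2.1))) (b, c)).trans
    (Eq.trans ?_ (congrArg (pr p S b * ·)
      (pr_map p (fun ω => (X₁ ω, S ω, Z₁ ω, X₂ ω))
        (fun q => g (q.1, q.2.2.1)) c).symm))
  simp only [Fintype.sum_prod_type, hIndep, Prod.mk.injEq]
  simp only [sum_ite_const (h1 := hm4)]
  simp only [Finset.mul_sum]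
  refine Finset.sum_congr rfl fun x _ => ?_
  rw [Finset.sum_comm]
  conv_rhs => rw [Finset.sum_comm]
  refine Finset.sum_congr rfl fun z _ => ?_
  have hm4' : pr p X₂ true + pr p X₂ false = 1 := by
    simpa [Fintype.sum_bool] using hm4
  by_cases hP : g (x, z) = c
  · cases b
    · simp [hP, Fintype.sum_bool]
      linear_combination (pr p X₁ x * pr p S false * pr p Z₁ z) * hm4'
        - (pr p X₁ x * pr p S false * pr p Z₁ z) * hm2
    · simp [hP, Fintype.sum_bool]
      linear_combination (pr p X₁ x * pr p S true * pr p Z₁ z) * hm4'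
        - (pr p X₁ x * pr p S true * pr p Z₁ z) * hm2
  · simp [hP]
end indep

lemma pr_bool_false (p : Ω → ℝ) (hsum : ∑ ω : Ω, p ω = 1) (X : Ω → Bool) :
    pr p X false = 1 - pr p X true := by
  have := sum_pr p hsum X
  simp [Fintype.sum_bool] at this
  linarith

lemma ent_bool_uniform (p : Ω → ℝ) (hsum : ∑ ω : Ω, p ω = 1) (X : Ω → Bool)
    (h : pr p X true = 1/2) : ent p X = 1 := by
  have hf : pr p X false = 1/2 := by rw [pr_bool_false p hsum X, h]; norm_num
  rw [ent_eq_sum_univ, Fintype.sum_bool, h, hf]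
  have : Real.logb 2 (1/2 : ℝ) = -1 := by
    rw [show (1/2 : ℝ) = 2⁻¹ by norm_num, Real.logb_inv,
      Real.logb_self_eq_one (by norm_num : (1:ℝ) < 2)]
  rw [this]; norm_num

lemma ent_bool_le_one (p : Ω → ℝ) (hp : IsPMF p) (X : Ω → Bool) : ent p X ≤ 1 := by
  have ht : 0 ≤ pr p X true := pr_nonneg p hp.1 X true
  have hf : pr p X false = 1 - pr p X true := pr_bool_false p hp.2 X
  have hf0 : 0 ≤ pr p X false := pr_nonneg p hp.1 X false
  rw [ent_eq_sum_univ, Fintype.sum_bool, hf]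
  set q := pr p X true with hq
  have hbin : Real.binEntropy q ≤ Real.log 2 := Real.binEntropy_le_log_two
  have hexp : Real.binEntropy q = -(q * Real.log q) - (1 - q) * Real.log (1 - q) := by
    rw [Real.binEntropy]
    rcases eq_or_ne q 0 with h0 | h0
    · simp [h0]
    rcases eq_or_ne (1 - q) 0 with h1 | h1
    · simp [h1]
    rw [Real.log_inv, Real.log_inv]; ring
  have hlog2 : (0:ℝ) < Real.log 2 := Real.log_pos (by norm_num)
  have : -(q * Real.logb 2 q + (1 - q) * Real.logb 2 (1 - q)) ≤ 1 := by
    rw [Real.logb, Real.logb]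
    calc -(q * (Real.log q / Real.log 2) + (1 - q) * (Real.log (1 - q) / Real.log 2))
        = (-(q * Real.log q) - (1 - q) * Real.log (1 - q)) / Real.log 2 := by ring
      _ ≤ 1 := by rw [div_le_one hlog2, ← hexp]; exact hbin
  linarith [this]

end Helpers

/-- **Example 3, evaluation of the inner bound with `V = S`.**  For mutually independent
binary `X₁, S, Z₁, X₂`, `Y₁ = X₁ ⊕ S ⊕ Z₁`, `Y₂ = X₂`, `Y = (Y₁,Y₂)` and `V = S`:
(i) `I(X₁;Y|V,X₂) = I(X₁;Y₁|S)`;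
(ii) `I(V,X₁,X₂;Y) - I(V,X₁,X₂;S) = I(X₁;Y₁|S) + I(S;Y₁) + H(X₂) - H(S)`;
(iii) `I(V,X₂;Y) - I(V,X₂;S) = I(S;Y₁|X₂) + H(X₂) - H(S)`.
Moreover if `X₂` and `S` are uniform then the right-hand side of (ii) is at least
`I(X₁;Y₁|S)` and the right-hand side of (iii) is nonnegative. -/
theorem example3_inner_bound_evaluation
    {Ω : Type*} [Fintype Ω]
    (p : Ω → ℝ) (hp : IsPMF p)
    (X₁ S Z₁ X₂ : Ω → Bool) (Y₁ : Ω → Bool)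
    (hIndep : ∀ a b c d : Bool,
      pr p (fun ω => (X₁ ω, S ω, Z₁ ω, X₂ ω)) (a, b, c, d)
        = pr p X₁ a * pr p S b * pr p Z₁ c * pr p X₂ d)
    (hY₁ : ∀ ω, Y₁ ω = Bool.xor (X₁ ω) (Bool.xor (S ω) (Z₁ ω))) :
    cmi p X₁ (fun ω => (Y₁ ω, X₂ ω)) (fun ω => (S ω, X₂ ω)) = cmi p X₁ Y₁ S ∧
    mi p (fun ω => (S ω, X₁ ω, X₂ ω)) (fun ω => (Y₁ ω, X₂ ω))
        - mi p (fun ω => (S ω, X₁ ω, X₂ ω)) S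
      = cmi p X₁ Y₁ S + mi p S Y₁ + ent p X₂ - ent p S ∧
    mi p (fun ω => (S ω, X₂ ω)) (fun ω => (Y₁ ω, X₂ ω))
        - mi p (fun ω => (S ω, X₂ ω)) S
      = cmi p S Y₁ X₂ + ent p X₂ - ent p S ∧
    (pr p X₂ true = 1/2 → pr p S true = 1/2 →
      cmi p X₁ Y₁ S ≤ cmi p X₁ Y₁ S + mi p S Y₁ + ent p X₂ - ent p S ∧
      0 ≤ cmi p S Y₁ X₂ + ent p X₂ - ent p S) := by

  have hpos := hp.1
  have hsum := hp.2
  have hY : Y₁ = fun ω => Bool.xor (X₁ ω) (Bool.xor (S ω) (Z₁ ω)) := funext hY₁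
  subst hY
  have iA : ∀ {α : Type} (f : Bool × Bool × Bool → α),
      IndepRV p (fun ω => f (X₁ ω, S ω, Z₁ ω)) X₂ :=
    fun f => indepA p hsum X₁ S Z₁ X₂ hIndep f
  have iB : ∀ {α : Type} (g : Bool × Bool → α),
      IndepRV p S (fun ω => g (X₁ ω, Z₁ ω)) :=
    fun g => indepB p hsum X₁ S Z₁ X₂ hIndep g
  have h1 : ent p (fun ω => (X₁ ω, (S ω, X₂ ω)))
      = ent p (fun ω => (X₁ ω, S ω)) + ent p X₂ :=
    (ent_comp p (fun ω => ((X₁ ω, S ω), X₂ ω))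
      (fun q => (q.1.1, (q.1.2, q.2))) (by decide)).symm.symm.trans
    (ent_pair_of_indep p hp _ _ (iA (fun t => (t.1, t.2.1))))
  have h2 : ent p (fun ω => ((Bool.xor (X₁ ω) (Bool.xor (S ω) (Z₁ ω)), X₂ ω), (S ω, X₂ ω)))
      = ent p (fun ω => (Bool.xor (X₁ ω) (Bool.xor (S ω) (Z₁ ω)), S ω)) + ent p X₂ :=
    (ent_comp p (fun ω => ((Bool.xor (X₁ ω) (Bool.xor (S ω) (Z₁ ω)), S ω), X₂ ω))
      (fun q => ((q.1.1, q.2), (q.1.2, q.2))) (by decide)).trans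
    (ent_pair_of_indep p hp _ _
      (iA (fun t => (Bool.xor t.1 (Bool.xor t.2.1 t.2.2), t.2.1))))
  have h3 : ent p (fun ω => (X₁ ω, (Bool.xor (X₁ ω) (Bool.xor (S ω) (Z₁ ω)), X₂ ω), (S ω, X₂ ω)))
      = ent p (fun ω => (X₁ ω, Bool.xor (X₁ ω) (Bool.xor (S ω) (Z₁ ω)), S ω)) + ent p X₂ :=
    (ent_comp p (fun ω => ((X₁ ω, (Bool.xor (X₁ ω) (Bool.xor (S ω) (Z₁ ω)), S ω)), X₂ ω))
      (fun q => (q.1.1, (q.1.2.1, q.2), (q.1.2.2, q.2))) (by decide)).trans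
    (ent_pair_of_indep p hp _ _
      (iA (fun t => (t.1, Bool.xor t.1 (Bool.xor t.2.1 t.2.2), t.2.1))))
  have h4 : ent p (fun ω => (S ω, X₂ ω)) = ent p S + ent p X₂ :=
    ent_pair_of_indep p hp _ _ (iA (fun t => t.2.1))
  have h5 : ent p (fun ω => (S ω, X₁ ω, X₂ ω))
      = ent p (fun ω => (X₁ ω, S ω)) + ent p X₂ :=
    (ent_comp p (fun ω => ((X₁ ω, S ω), X₂ ω))
      (fun q => (q.1.2, (q.1.1, q.2))) (by decide)).trans
    (ent_pair_of_indep p hp _ _ (iA (fun t => (t.1, t.2.1))))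
  have h6 : ent p (fun ω => (Bool.xor (X₁ ω) (Bool.xor (S ω) (Z₁ ω)), X₂ ω))
      = ent p (fun ω => Bool.xor (X₁ ω) (Bool.xor (S ω) (Z₁ ω))) + ent p X₂ :=
    ent_pair_of_indep p hp _ _ (iA (fun t => Bool.xor t.1 (Bool.xor t.2.1 t.2.2)))
  have h7 : ent p (fun ω => ((S ω, X₁ ω, X₂ ω), (Bool.xor (X₁ ω) (Bool.xor (S ω) (Z₁ ω)), X₂ ω)))
      = ent p (fun ω => (X₁ ω, Bool.xor (X₁ ω) (Bool.xor (S ω) (Z₁ ω)), S ω)) + ent p X₂ :=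
    (ent_comp p (fun ω => ((X₁ ω, (Bool.xor (X₁ ω) (Bool.xor (S ω) (Z₁ ω)), S ω)), X₂ ω))
      (fun q => ((q.1.2.2, (q.1.1, q.2)), (q.1.2.1, q.2))) (by decide)).trans
    (ent_pair_of_indep p hp _ _
      (iA (fun t => (t.1, Bool.xor t.1 (Bool.xor t.2.1 t.2.2), t.2.1))))
  have h8 : ent p (fun ω => ((S ω, X₁ ω, X₂ ω), S ω))
      = ent p (fun ω => (X₁ ω, S ω)) + ent p X₂ :=
    (ent_comp p (fun ω => ((X₁ ω, S ω), X₂ ω))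
      (fun q => ((q.1.2, (q.1.1, q.2)), q.1.2)) (by decide)).trans
    (ent_pair_of_indep p hp _ _ (iA (fun t => (t.1, t.2.1))))
  have h9 : ent p (fun ω => ((S ω, X₂ ω), (Bool.xor (X₁ ω) (Bool.xor (S ω) (Z₁ ω)), X₂ ω)))
      = ent p (fun ω => (S ω, Bool.xor (X₁ ω) (Bool.xor (S ω) (Z₁ ω)))) + ent p X₂ :=
    (ent_comp p (fun ω => ((S ω, Bool.xor (X₁ ω) (Bool.xor (S ω) (Z₁ ω))), X₂ ω))
      (fun q => ((q.1.1, q.2), (q.1.2, q.2))) (by decide)).trans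
    (ent_pair_of_indep p hp _ _
      (iA (fun t => (t.2.1, Bool.xor t.1 (Bool.xor t.2.1 t.2.2)))))
  have h10 : ent p (fun ω => ((S ω, X₂ ω), S ω)) = ent p S + ent p X₂ :=
    (ent_comp p (fun ω => (S ω, X₂ ω))
      (fun q => ((q.1, q.2), q.1)) (by decide)).trans h4
  have h11 : ent p (fun ω => (S ω, Bool.xor (X₁ ω) (Bool.xor (S ω) (Z₁ ω)), X₂ ω))
      = ent p (fun ω => (S ω, Bool.xor (X₁ ω) (Bool.xor (S ω) (Z₁ ω)))) + ent p X₂ :=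
    (ent_comp p (fun ω => ((S ω, Bool.xor (X₁ ω) (Bool.xor (S ω) (Z₁ ω))), X₂ ω))
      (fun q => (q.1.1, (q.1.2, q.2))) (by decide)).trans
    (ent_pair_of_indep p hp _ _
      (iA (fun t => (t.2.1, Bool.xor t.1 (Bool.xor t.2.1 t.2.2)))))
  have h12 : ent p (fun ω => (Bool.xor (X₁ ω) (Bool.xor (S ω) (Z₁ ω)), S ω))
      = ent p (fun ω => (S ω, Bool.xor (X₁ ω) (Bool.xor (S ω) (Z₁ ω)))) :=
    (ent_comp p (fun ω => (S ω, Bool.xor (X₁ ω) (Bool.xor (S ω) (Z₁ ω))))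
      (fun q => (q.2, q.1)) (by decide))
  refine ⟨?_, ?_, ?_, ?_⟩
  · simp only [cmi]
    rw [h1, h2, h3, h4]
    ring
  · simp only [mi, cmi]
    rw [h5, h6, h7, h8, h12]
    ring
  · simp only [mi, cmi]
    rw [h4, h6, h9, h10, h11]
    ring
  · intro hU2 hUS
    have hHX2 : ent p X₂ = 1 := ent_bool_uniform p hsum X₂ hU2
    have hHS : ent p S = 1 := ent_bool_uniform p hsum S hUS
    have hsy : ent p (fun ω => (S ω, Bool.xor (X₁ ω) (Bool.xor (S ω) (Z₁ ω))))
        = ent p S + ent p (fun ω => Bool.xor (X₁ ω) (Z₁ ω)) := by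
      have e : (fun ω => (S ω, Bool.xor (X₁ ω) (Bool.xor (S ω) (Z₁ ω))))
          = (fun ω => ((fun q : Bool × Bool => (q.1, Bool.xor q.1 q.2))
              (S ω, Bool.xor (X₁ ω) (Z₁ ω)))) := by
        funext ω
        cases hx : X₁ ω <;> cases hs : S ω <;> cases hz : Z₁ ω <;> simp [hx, hs, hz]
      rw [e]
      exact (ent_comp p (fun ω => (S ω, Bool.xor (X₁ ω) (Z₁ ω)))
          (fun q => (q.1, Bool.xor q.1 q.2)) (by decide)).trans
        (ent_pair_of_indep p hp _ _ (iB (fun t => Bool.xor t.1 t.2)))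
    have hSf : pr p S false = 1/2 := by
      rw [pr_bool_false p hsum S, hUS]; norm_num
    have hB0 : IndepRV p S (fun ω => (X₁ ω, Z₁ ω)) := iB (fun t => (t.1, t.2))
    have hB0' : ∀ (x : Bool) (y : Bool × Bool),
        pr p (fun ω => (S ω, (X₁ ω, Z₁ ω))) (x, y)
          = pr p S x * pr p (fun ω => (X₁ ω, Z₁ ω)) y := hB0
    have hsumW : ∑ w : Bool × Bool, pr p (fun ω => (X₁ ω, Z₁ ω)) w = 1 :=
      sum_pr p hsum _
    have hprY : pr p (fun ω => Bool.xor (X₁ ω) (Bool.xor (S ω) (Z₁ ω))) true = 1/2 := by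
      refine (pr_map p (fun ω => (S ω, (X₁ ω, Z₁ ω)))
        (fun q => Bool.xor q.2.1 (Bool.xor q.1 q.2.2)) true).trans ?_
      simp only [Fintype.sum_prod_type, Fintype.sum_bool, hB0', hUS, hSf]
      simp only [Fintype.sum_prod_type, Fintype.sum_bool] at hsumW
      norm_num
      linarith [hsumW]
    have hHY : ent p (fun ω => Bool.xor (X₁ ω) (Bool.xor (S ω) (Z₁ ω))) = 1 :=
      ent_bool_uniform p hsum _ hprY
    have hW : ent p (fun ω => Bool.xor (X₁ ω) (Z₁ ω)) ≤ 1 :=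
      ent_bool_le_one p hp _
    have hmi : 0 ≤ mi p S (fun ω => Bool.xor (X₁ ω) (Bool.xor (S ω) (Z₁ ω))) := by
      simp only [mi]
      rw [hsy]
      linarith [hHY, hW]
    constructor
    · linarith [hmi, hHX2, hHS]
    · have hc : cmi p S (fun ω => Bool.xor (X₁ ω) (Bool.xor (S ω) (Z₁ ω))) X₂
          = mi p S (fun ω => Bool.xor (X₁ ω) (Bool.xor (S ω) (Z₁ ω))) := by
        simp only [mi, cmi]
        rw [h4, h6, h11]
        ring
      linarith [hmi, hHX2, hHS, hc]
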